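/- Let k ≥ 3 and ℓ ≥ 0, let G be a finite simple graph that is k-vertex-critical and (P3+ℓP1)-free, and let S be a maximum independent set of G with |S| ≥ (k−1)²·(ℓ+3). Then there exists a vertex of G outside S that has at least two neighbors in S. -/

import Mathlib

open SimpleGraph

/-- The graph `P₃ + ℓP₁`: disjoint union of a path on 3 vertices and `ℓ` isolated vertices. -/
def P3PlusP1 (ℓ : ℕ) : SimpleGraph (Fin 3 ⊕ Fin ℓ) :=
  pathGraph 3 ⊕g (⊥ : SimpleGraph (Fin ℓ))

/-- `G` is `H`-free: no induced subgraph of `G` is isomorphic to `H`. -/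
def HFree {W V : Type*} (H : SimpleGraph W) (G : SimpleGraph V) : Prop :=
  IsEmpty (H ↪g G)

/-- `G` is `k`-vertex-critical: `χ(G) = k` and `χ(G - v) < k` for every vertex `v`. -/
def VertexCritical {V : Type*} (G : SimpleGraph V) (k : ℕ) : Prop :=
  G.chromaticNumber = k ∧ ∀ v : V, (G.induce {v}ᶜ).chromaticNumber < k

/-- `S` is an independent (stable) set of `G`. -/
def IndepSet {V : Type*} (G : SimpleGraph V) (S : Set V) : Prop :=
  S.Pairwise (fun a b => ¬ G.Adj a b)

/-- pick `n` distinct elements from a finite set of size at least `n`. -/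
lemma exists_inj_into {V : Type*} (D : Set V) (hD : D.Finite) {n : ℕ} (h : n ≤ D.ncard) :
    ∃ g : Fin n → V, Function.Injective g ∧ ∀ i, g i ∈ D := by
  classical
  have hcard : D.ncard = hD.toFinset.card := Set.ncard_eq_toFinset_card _ hD
  have h' : n ≤ hD.toFinset.card := by omega
  refine ⟨fun i => (hD.toFinset.equivFin.symm (Fin.castLE h' i) : V), ?_, ?_⟩
  · intro i j hij
    have h1 : hD.toFinset.equivFin.symm (Fin.castLE h' i)
        = hD.toFinset.equivFin.symm (Fin.castLE h' j) := Subtype.ext hij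
    have h2 := hD.toFinset.equivFin.symm.injective h1
    exact Fin.ext (by simpa using congrArg Fin.val h2)
  · intro i
    have := (hD.toFinset.equivFin.symm (Fin.castLE h' i)).2
    exact hD.mem_toFinset.mp this

/-- build an embedding of `P₃ + ℓP₁` from suitable vertices. -/
lemma embed_P3 {V : Type*} {G : SimpleGraph V} {ℓ : ℕ} {a b c : V}
    (hab : G.Adj a b) (hbc : G.Adj b c) (hac : ¬ G.Adj a c) (hac' : a ≠ c)
    (g : Fin ℓ → V) (hginj : Function.Injective g)
    (hga : ∀ i, ¬ G.Adj a (g i)) (hgb : ∀ i, ¬ G.Adj b (g i)) (hgc : ∀ i, ¬ G.Adj c (g i))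
    (hne : ∀ i, g i ≠ a ∧ g i ≠ b ∧ g i ≠ c)
    (hgg : ∀ i j, ¬ G.Adj (g i) (g j)) :
    Nonempty (P3PlusP1 ℓ ↪g G) := by
  have hab' : a ≠ b := hab.ne
  have hbc' : b ≠ c := hbc.ne
  have hba : G.Adj b a := hab.symm
  have hcb : G.Adj c b := hbc.symm
  have hca : ¬ G.Adj c a := fun h => hac h.symm
  have hga' : ∀ i, ¬ G.Adj (g i) a := fun i h => hga i h.symm
  have hgb' : ∀ i, ¬ G.Adj (g i) b := fun i h => hgb i h.symm
  have hgc' : ∀ i, ¬ G.Adj (g i) c := fun i h => hgc i h.symm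
  refine ⟨⟨⟨Sum.elim ![a, b, c] g, ?_⟩, ?_⟩⟩
  · intro x y hxy
    rcases x with x | x <;> rcases y with y | y
    · simp only [Sum.elim_inl] at hxy
      fin_cases x <;> fin_cases y <;> simp_all
    · exfalso
      simp only [Sum.elim_inl, Sum.elim_inr] at hxy
      fin_cases x <;>
        simp_all [(hne y).1.symm, (hne y).2.1.symm, (hne y).2.2.symm]
    · exfalso
      simp only [Sum.elim_inl, Sum.elim_inr] at hxy
      fin_cases y <;>
        simp_all [(hne x).1, (hne x).2.1, (hne x).2.2]
    · simp only [Sum.elim_inr] at hxy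
      exact congrArg Sum.inr (hginj hxy)
  · intro x y
    show G.Adj (Sum.elim ![a, b, c] g x) (Sum.elim ![a, b, c] g y) ↔ _
    rcases x with x | x <;> rcases y with y | y
    · fin_cases x <;> fin_cases y <;>
        simp_all [P3PlusP1, pathGraph_adj]
    · fin_cases x <;> simp [P3PlusP1, hga, hgb, hgc]
    · fin_cases y <;> simp [P3PlusP1, hga', hgb', hgc']
    · simp [P3PlusP1, hgg x y]

theorem stmt4 (k ℓ : ℕ) (hk : 3 ≤ k) (V : Type*) [Fintype V] (G : SimpleGraph V)
    (hcrit : VertexCritical G k) (hfree : HFree (P3PlusP1 ℓ) G)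
    (S : Set V) (hS : IndepSet G S) (hmax : ∀ T : Set V, IndepSet G T → T.ncard ≤ S.ncard)
    (hScard : (k - 1) ^ 2 * (ℓ + 3) ≤ S.ncard) :
    ∃ b : V, b ∉ S ∧ 2 ≤ {s ∈ S | G.Adj b s}.ncard := by
  classical
  by_contra hcon
  push_neg at hcon
  -- basic cardinality facts
  have hS4 : 4 * (ℓ + 3) ≤ S.ncard := by
    have h2 : 2 ≤ k - 1 := by omega
    have h4 : 4 ≤ (k - 1) ^ 2 := by nlinarith
    calc 4 * (ℓ + 3) ≤ (k - 1) ^ 2 * (ℓ + 3) := Nat.mul_le_mul_right _ h4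
      _ ≤ S.ncard := hScard
  -- every vertex outside S has a neighbor in S
  have hex : ∀ v, v ∉ S → ∃ s, s ∈ S ∧ G.Adj v s := by
    intro v hv
    by_contra h
    push_neg at h
    have hT : IndepSet G (insert v S) := by
      intro x hx y hy hxy
      rcases hx with rfl | hx
      · rcases hy with rfl | hy
        · exact absurd rfl hxy
        · exact h y hy
      · rcases hy with rfl | hy
        · exact fun hadj => h x hx hadj.symm
        · exact hS hx hy hxy
    have hle := hmax _ hT
    rw [Set.ncard_insert_of_notMem hv] at hle
    omega
  -- the neighbor in S is unique
  have huniq : ∀ v, v ∉ S → ∀ s, s ∈ S → ∀ t, t ∈ S → G.Adj v s → G.Adj v t → s = t := by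
    intro v hv s hs t ht hvs hvt
    by_contra hst
    have hsub : ({s, t} : Set V) ⊆ {x ∈ S | G.Adj v x} := by
      intro x hx
      rcases hx with rfl | hx
      · exact ⟨hs, hvs⟩
      · rcases hx with rfl
        exact ⟨ht, hvt⟩
    have h2 : ({s, t} : Set V).ncard = 2 := Set.ncard_pair hst
    have hle := Set.ncard_le_ncard hsub (Set.toFinite _)
    have := hcon v hv
    omega
  -- choose the unique neighbor
  have hex' : ∀ v : V, ∃ s : V, v ∉ S → s ∈ S ∧ G.Adj v s := by
    intro v
    by_cases hv : v ∈ S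
    · exact ⟨v, fun h => absurd hv h⟩
    · obtain ⟨s, hs, hadj⟩ := hex v hv
      exact ⟨s, fun _ => ⟨hs, hadj⟩⟩
  choose f hf using hex'
  have hfu : ∀ v, v ∉ S → ∀ s, s ∈ S → G.Adj v s → s = f v := by
    intro v hv s hs hadj
    exact huniq v hv s hs (f v) (hf v hv).1 hadj (hf v hv).2
  by_cases hc1 : ∃ u v, u ∉ S ∧ v ∉ S ∧ G.Adj u v ∧ f u ≠ f v
  · -- Case 1 : an edge outside S whose ends have different S-neighbors gives induced P₃ + ℓP₁
    obtain ⟨u, v, hu, hv, huv, hnefuv⟩ := hc1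
    have hDcard : ℓ ≤ (S \ {f u, f v}).ncard := by
      have h1 : S ⊆ (S \ {f u, f v}) ∪ {f u, f v} := by
        intro x hx
        by_cases h : x ∈ ({f u, f v} : Set V)
        · exact Set.mem_union_right _ h
        · exact Set.mem_union_left _ ⟨hx, h⟩
      have h2 := Set.ncard_le_ncard h1 (Set.toFinite _)
      have h3 := Set.ncard_union_le (S \ {f u, f v}) ({f u, f v} : Set V)
      have h4 : ({f u, f v} : Set V).ncard ≤ 2 := by
        refine le_trans (Set.ncard_insert_le _ _) ?_
        rw [Set.ncard_singleton]
      omega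
    obtain ⟨g, hginj, hgD⟩ := exists_inj_into _ (Set.toFinite _) hDcard
    have hgS : ∀ i, g i ∈ S := fun i => (hgD i).1
    have hgnfu : ∀ i, g i ≠ f u := fun i h => (hgD i).2 (by simp [h])
    have hgnfv : ∀ i, g i ≠ f v := fun i h => (hgD i).2 (by simp [h])
    have hfuS : f u ∈ S := (hf u hu).1
    have hfvS : f v ∈ S := (hf v hv).1
    have hab : G.Adj (f u) u := (hf u hu).2.symm
    have hac : ¬ G.Adj (f u) v := fun h => hnefuv (hfu v hv (f u) hfuS h.symm)
    have hac' : f u ≠ v := fun h => hv (h ▸ hfuS)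
    have hga : ∀ i, ¬ G.Adj (f u) (g i) :=
      fun i => hS hfuS (hgS i) (Ne.symm (hgnfu i))
    have hgb : ∀ i, ¬ G.Adj u (g i) := fun i h => hgnfu i (hfu u hu (g i) (hgS i) h)
    have hgc : ∀ i, ¬ G.Adj v (g i) := fun i h => hgnfv i (hfu v hv (g i) (hgS i) h)
    have hne : ∀ i, g i ≠ f u ∧ g i ≠ u ∧ g i ≠ v :=
      fun i => ⟨hgnfu i, fun h => hu (h ▸ hgS i), fun h => hv (h ▸ hgS i)⟩
    have hgg : ∀ i j, ¬ G.Adj (g i) (g j) := by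
      intro i j h
      by_cases hij : i = j
      · subst hij; exact G.loopless.irrefl _ h
      · exact hS (hgS i) (hgS j) (fun he => hij (hginj he)) h
    obtain ⟨emb⟩ := embed_P3 hab huv hac hac' g hginj hga hgb hgc hne hgg
    exact hfree.false emb
  push_neg at hc1
  by_cases hc2 : ∃ u w, u ∉ S ∧ w ∉ S ∧ f u = f w ∧ ¬ G.Adj u w ∧ u ≠ w
  · -- Case 2 : two nonadjacent vertices in a fiber give induced P₃ + ℓP₁ through their center
    obtain ⟨u, w, hu, hw, hfuw, hnadj, hneuw⟩ := hc2
    have hDcard : ℓ ≤ (S \ {f u, f u}).ncard := by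
      have h1 : S ⊆ (S \ {f u, f u}) ∪ {f u, f u} := by
        intro x hx
        by_cases h : x ∈ ({f u, f u} : Set V)
        · exact Set.mem_union_right _ h
        · exact Set.mem_union_left _ ⟨hx, h⟩
      have h2 := Set.ncard_le_ncard h1 (Set.toFinite _)
      have h3 := Set.ncard_union_le (S \ {f u, f u}) ({f u, f u} : Set V)
      have h4 : ({f u, f u} : Set V).ncard ≤ 2 := by
        refine le_trans (Set.ncard_insert_le _ _) ?_
        rw [Set.ncard_singleton]
      omega
    obtain ⟨g, hginj, hgD⟩ := exists_inj_into _ (Set.toFinite _) hDcard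
    have hgS : ∀ i, g i ∈ S := fun i => (hgD i).1
    have hgnfu : ∀ i, g i ≠ f u := fun i h => (hgD i).2 (by simp [h])
    have hfuS : f u ∈ S := (hf u hu).1
    have hab : G.Adj u (f u) := (hf u hu).2
    have hbc : G.Adj (f u) w := (hfuw ▸ (hf w hw).2).symm
    have hac' : u ≠ w := hneuw
    have hga : ∀ i, ¬ G.Adj u (g i) := fun i h => hgnfu i (hfu u hu (g i) (hgS i) h)
    have hgb : ∀ i, ¬ G.Adj (f u) (g i) :=
      fun i => hS hfuS (hgS i) (Ne.symm (hgnfu i))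
    have hgc : ∀ i, ¬ G.Adj w (g i) := fun i h =>
      hgnfu i (hfuw ▸ hfu w hw (g i) (hgS i) h)
    have hne : ∀ i, g i ≠ u ∧ g i ≠ f u ∧ g i ≠ w :=
      fun i => ⟨fun h => hu (h ▸ hgS i), hgnfu i, fun h => hw (h ▸ hgS i)⟩
    have hgg : ∀ i j, ¬ G.Adj (g i) (g j) := by
      intro i j h
      by_cases hij : i = j
      · subst hij; exact G.loopless.irrefl _ h
      · exact hS (hgS i) (hgS j) (fun he => hij (hginj he)) h
    obtain ⟨emb⟩ := embed_P3 hab hbc hnadj hac' g hginj hga hgb hgc hne hgg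
    exact hfree.false emb
  push_neg at hc2
  -- Case 3 : every edge lies within a class {s} ∪ f⁻¹(s); build a (k-1)-coloring of G
  have h2 : 1 < S.ncard := by omega
  obtain ⟨s, t, hsS, htS, hst⟩ := (Set.one_lt_ncard_iff (Set.toFinite _)).mp h2
  -- representatives
  set rep : V → V := fun v => if v ∈ S then v else f v with hrep
  have hrepmem : ∀ v, v ∈ S → rep v = v := by intro v hv; simp [hrep, hv]
  have hrepnmem : ∀ v, v ∉ S → rep v = f v := by intro v hv; simp [hrep, hv]
  have key : ∀ u v, G.Adj u v → rep u = rep v := by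
    intro u v hadj
    by_cases hu : u ∈ S <;> by_cases hv : v ∈ S
    · exact absurd hadj (hS hu hv hadj.ne)
    · rw [hrepmem u hu, hrepnmem v hv]
      exact hfu v hv u hu hadj.symm
    · rw [hrepnmem u hu, hrepmem v hv]
      exact (hfu u hu v hv hadj).symm
    · rw [hrepnmem u hu, hrepnmem v hv]
      exact hc1 u v hu hv hadj
  have hmem1 : ∀ v, rep v = t → v ∈ ({s}ᶜ : Set V) := by
    intro v h
    simp only [Set.mem_compl_iff, Set.mem_singleton_iff]
    intro hvs
    subst hvs
    rw [hrepmem v hsS] at h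
    exact hst h
  have hmem2 : ∀ v, rep v ≠ t → v ∈ ({t}ᶜ : Set V) := by
    intro v h
    simp only [Set.mem_compl_iff, Set.mem_singleton_iff]
    intro hvt
    subst hvt
    exact h (hrepmem v htS)
  -- (k-1)-colorings of G - s and G - t
  have getcol : ∀ x : V, Nonempty ((G.induce {x}ᶜ).Coloring (Fin (k - 1))) := by
    intro x
    have h := hcrit.2 x
    have hnetop : (G.induce {x}ᶜ).chromaticNumber ≠ ⊤ := (h.trans_le le_top).ne
    lift (G.induce {x}ᶜ).chromaticNumber to ℕ using hnetop with n hn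
    have hnk : n < k := by exact_mod_cast h
    have hcoln : (G.induce {x}ᶜ).Colorable n :=
      chromaticNumber_le_iff_colorable.mp (le_of_eq hn.symm)
    exact hcoln.mono (by omega)
  obtain ⟨cs⟩ := getcol s
  obtain ⟨ct⟩ := getcol t
  have CC : G.Coloring (Fin (k - 1)) := by
    refine Coloring.mk
      (fun v => if h : rep v = t then cs ⟨v, hmem1 v h⟩ else ct ⟨v, hmem2 v h⟩) ?_
    intro u v hadj
    have hr := key u v hadj
    by_cases h : rep u = t
    · rw [dif_pos h, dif_pos (hr.symm.trans h)]
      exact cs.valid hadj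
    · rw [dif_neg h, dif_neg (fun hh => h (hr.trans hh))]
      exact ct.valid hadj
  have hcolG : G.Colorable (k - 1) := ⟨CC⟩
  have hle : G.chromaticNumber ≤ (k - 1 : ℕ) := chromaticNumber_le_iff_colorable.mpr hcolG
  rw [hcrit.1] at hle
  have : k ≤ k - 1 := by exact_mod_cast hle
  omega
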